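/- (Verlinde formula.) For every p ≥ 1 and every v_1, …, v_p ∈ V: (s_{v_1} s_{v_2} ⋯ s_{v_p}) e_{v_0} = Σ_{i∈V} (∏_{j=1}^p θ_{v_j}(i)) · u^{(i)}. In particular, if c: V → ℂ is such that s_{v_1} ⋯ s_{v_p} = Σ_{v∈V} c(v)·s_v and the matrices (s_v) satisfy s_v e_{v_0} = e_v, then c(v) = Σ_{i∈V} (∏_{j=1}^p θ_{v_j}(i)) · u^{(i)}(v) for every v ∈ V. -/

import Mathlib

noncomputable section

open Finset Matrix

namespace Paper

/-- Verlinde formula: for vertices `v_1,…,v_p`,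
`(s_{v_1}⋯s_{v_p}) e_{v_0} = Σ_i (∏_j θ_{v_j}(i)) u^{(i)}`, and consequently the structure
coefficients `c` of `s_{v_1}⋯s_{v_p} = Σ_v c(v) s_v` are `c(v) = Σ_i (∏_j θ_{v_j}(i)) u^{(i)}(v)`. -/
theorem stmt6 {V : Type*} [Fintype V] [DecidableEq V] [Nonempty V] (v0 : V)
    (s : V → Matrix V V ℂ)
    (hse : ∀ v, (s v).mulVec (Pi.single v0 1) = Pi.single v 1)
    (u w : V → V → ℂ)
    (hbasis : LinearIndependent ℂ u)
    (hdual : ∀ i j, (∑ v, (starRingEnd ℂ) (w i v) * u j v) = if i = j then 1 else 0)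
    (hnorm : ∀ i, w i v0 = 1)
    (θ : V → V → ℂ)
    (heig : ∀ v i, (s v).mulVec (u i) = θ v i • u i) :
    ∀ (p : ℕ), 1 ≤ p → ∀ vs : Fin p → V,
      ((List.ofFn fun j => s (vs j)).prod.mulVec (Pi.single v0 1) =
        ∑ i, (∏ j, θ (vs j) i) • u i) ∧
      (∀ c : V → ℂ, (List.ofFn fun j => s (vs j)).prod = ∑ v, c v • s v →
        ∀ v, c v = ∑ i, (∏ j, θ (vs j) i) * u i v) := by
  classical
  -- u is a basis
  have hcard : Fintype.card V = Module.finrank ℂ (V → ℂ) := by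
    simp [Module.finrank_pi]
  let B : Module.Basis V ℂ (V → ℂ) := basisOfLinearIndependentOfCardEqFinrank hbasis hcard
  have hB : ∀ i, B i = u i := fun i => by
    simp [B, coe_basisOfLinearIndependentOfCardEqFinrank]
  -- coordinates via w
  have hrepr : ∀ (x : V → ℂ) (j : V), B.repr x j = ∑ v, (starRingEnd ℂ) (w j v) * x v := by
    intro x j
    conv_rhs => rw [← B.sum_repr x]
    simp only [Finset.sum_apply, Pi.smul_apply, smul_eq_mul, hB, Finset.mul_sum]
    rw [Finset.sum_comm]
    have h : ∀ i, (∑ v, (starRingEnd ℂ) (w j v) * (B.repr x i * u i v))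
        = B.repr x i * (if j = i then 1 else 0) := by
      intro i
      rw [← hdual j i, Finset.mul_sum]
      exact Finset.sum_congr rfl fun v _ => by ring
    rw [Finset.sum_congr rfl fun i _ => h i]
    simp
  -- e_{v0} = ∑ i, u i
  have hsingle : (Pi.single v0 1 : V → ℂ) = ∑ i, u i := by
    have hcoef : ∀ j, B.repr (Pi.single v0 1 : V → ℂ) j = 1 := by
      intro j
      rw [hrepr]
      rw [Finset.sum_eq_single v0]
      · simp [hnorm j]
      · intro v _ hv; simp [Pi.single_apply, hv]
      · simp
    calc (Pi.single v0 1 : V → ℂ)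
        = ∑ i, B.repr (Pi.single v0 1 : V → ℂ) i • B i := (B.sum_repr _).symm
      _ = ∑ i, u i := by simp [hcoef, hB]
  -- main vector formula, for all p
  have main : ∀ (p : ℕ) (vs : Fin p → V),
      (List.ofFn fun j => s (vs j)).prod.mulVec (Pi.single v0 1) =
        ∑ i, (∏ j, θ (vs j) i) • u i := by
    intro p
    induction p with
    | zero =>
        intro vs
        simp [Matrix.one_mulVec, hsingle]
    | succ n ih =>
        intro vs
        rw [List.ofFn_succ, List.prod_cons, ← Matrix.mulVec_mulVec, ih]
        have : (s (vs 0)).mulVec (∑ i, (∏ j : Fin n, θ (vs j.succ) i) • u i)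
            = ∑ i, (∏ j : Fin n, θ (vs j.succ) i) • ((s (vs 0)).mulVec (u i)) := by
          rw [show (s (vs 0)).mulVec = (s (vs 0)).mulVecLin from rfl]
          rw [map_sum]
          simp
        rw [this]
        refine Finset.sum_congr rfl fun i _ => ?_
        rw [heig, Fin.prod_univ_succ, smul_smul]
        ring_nf
  intro p _ vs
  refine ⟨main p vs, ?_⟩
  intro c hc v
  have h1 := main p vs
  rw [hc] at h1
  have h2 : (∑ v', c v' • s v').mulVec (Pi.single v0 1)
      = ∑ v', c v' • (Pi.single v' 1 : V → ℂ) := by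
    funext x
    simp only [Matrix.mulVec, dotProduct, Finset.sum_apply, Pi.smul_apply,
      Matrix.sum_apply, Matrix.smul_apply, smul_eq_mul, Finset.sum_mul]
    rw [Finset.sum_comm]
    refine Finset.sum_congr rfl fun v' _ => ?_
    have hv := congrFun (hse v') x
    simp only [Matrix.mulVec, dotProduct] at hv
    rw [← hv, Finset.mul_sum]
    exact Finset.sum_congr rfl fun y _ => by ring
  rw [h2] at h1
  have := congrFun h1 v
  simp only [Finset.sum_apply, Pi.smul_apply, smul_eq_mul] at this
  rw [Finset.sum_eq_single v (fun v' _ hv' => by simp [Pi.single_apply, hv'])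
      (by simp)] at this
  simpa using this

end Paper
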